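/- Let K be a field of characteristic p > 0 with a valuation v (a Krull valuation with values in a linearly ordered abelian group, written additively). Let f(X,Y) = X^{p+1}Y + X^{p+1}Y^{p^2} + X^{2p+1} + X. If x ∈ K^× is such that v(x) is not divisible by p in the value group, then for every y ∈ K the value v(f(x,y)) is not divisible by p; in particular f(x,y) is not a p-th power in K. -/

import Mathlib

theorem key_val {K : Type*} [Field K] {Γ₀ : Type*} [LinearOrderedCommGroupWithZero Γ₀]
    (v : Valuation K Γ₀) (p : ℕ) (hp : 2 ≤ p) (x y : K) (hx : v x ≠ 0)
    (hvx : ¬ ∃ γ : Γ₀, v x = γ ^ p) :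
    ∃ d : Γ₀, d ≠ 0 ∧
      v (x ^ (p + 1) * y + x ^ (p + 1) * y ^ (p ^ 2) + x ^ (2 * p + 1) + x) = v x * d ^ p := by
  have hp0 : p ≠ 0 := by omega
  have hp20 : p ^ 2 ≠ 0 := pow_ne_zero _ hp0
  have hpp : p ^ 2 = p * p := pow_two p
  have h1p2 : 1 < p ^ 2 := by rw [hpp]; nlinarith
  set a := v x with ha
  set b := v y with hb
  have ha1 : a ≠ 1 := fun h => hvx ⟨1, by rw [h, one_pow]⟩
  have hap0 : ∀ n : ℕ, a ^ n ≠ 0 := fun n => pow_ne_zero _ hx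
  have mullt : ∀ X Y Z : Γ₀, X ≠ 0 → Y < Z → X * Y < X * Z := fun X Y Z hX h =>
    mul_lt_mul_of_le_of_lt_of_nonneg_of_pos le_rfl h zero_le' (zero_lt_iff.mpr hX)
  have vT1 : v (x ^ (p + 1) * y) = a ^ (p + 1) * b := by rw [map_mul, map_pow]
  have vT2 : v (x ^ (p + 1) * y ^ (p ^ 2)) = a ^ (p + 1) * b ^ (p ^ 2) := by
    rw [map_mul, map_pow, map_pow]
  have vT3 : v (x ^ (2 * p + 1)) = a ^ (2 * p + 1) := map_pow v x _
  have v12 : v (x ^ (p + 1) * y + x ^ (p + 1) * y ^ (p ^ 2))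
      = a ^ (p + 1) * v (y + y ^ (p ^ 2)) := by rw [← mul_add, map_mul, map_pow]
  have id3 : a * (a ^ 2) ^ p = a ^ (2 * p + 1) := by
    rw [← pow_mul]; exact (pow_succ' a (2 * p)).symm
  have idT3 : a ^ (2 * p + 1) = a ^ (p + 1) * a ^ p := by rw [← pow_add]; congr 1; omega
  have idT2 : ∀ c : Γ₀, a * (a * c ^ p) ^ p = a ^ (p + 1) * c ^ (p ^ 2) := by
    intro c; rw [hpp, pow_mul, mul_pow, ← mul_assoc, ← pow_succ']
  rcases lt_trichotomy a 1 with hA | hA | hA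
  · -- a < 1
    have hap : a ^ p < 1 := pow_lt_one₀ zero_le' hA hp0
    have ha2p : a ^ (2 * p) < 1 := pow_lt_one₀ zero_le' hA (by omega)
    have hT3a : a ^ (2 * p + 1) < a := by
      calc a ^ (2 * p + 1) = a * a ^ (2 * p) := pow_succ' a (2 * p)
        _ < a * 1 := mullt _ _ _ hx ha2p
        _ = a := mul_one a
    rcases le_or_gt b 1 with hB | hB
    · -- b ≤ 1 : v f = a
      refine ⟨1, one_ne_zero, ?_⟩
      have hc : v (y + y ^ (p ^ 2)) ≤ 1 := by
        refine (v.map_add _ _).trans (max_le hB ?_)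
        rw [map_pow]; exact pow_le_one₀ zero_le' hB
      have h12 : v (x ^ (p + 1) * y + x ^ (p + 1) * y ^ (p ^ 2)) < a := by
        rw [v12]
        calc a ^ (p + 1) * v (y + y ^ (p ^ 2)) ≤ a ^ (p + 1) * 1 := mul_le_mul_right hc _
          _ = a * a ^ p := by rw [mul_one, pow_succ' a p]
          _ < a * 1 := mullt _ _ _ hx hap
          _ = a := mul_one a
      have h123 : v (x ^ (p + 1) * y + x ^ (p + 1) * y ^ (p ^ 2) + x ^ (2 * p + 1)) < a :=
        lt_of_le_of_lt (v.map_add _ _) (max_lt h12 (by rw [vT3]; exact hT3a))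
      rw [one_pow, mul_one]
      exact v.map_add_eq_of_lt_right h123
    · -- b > 1
      have hb0 : b ≠ 0 := (zero_lt_one.trans hB).ne'
      have hbB : b < b ^ (p ^ 2) := by
        conv_lhs => rw [← pow_one b]
        exact pow_lt_pow_right₀ hB h1p2
      rcases lt_trichotomy (a ^ p * b ^ (p ^ 2)) 1 with hD | hD | hD
      · -- v f = a
        refine ⟨1, one_ne_zero, ?_⟩
        have hT1 : a ^ (p + 1) * b < a := by
          calc a ^ (p + 1) * b = a * (a ^ p * b) := by rw [← mul_assoc, ← pow_succ']
            _ < a * 1 := mullt _ _ _ hx (lt_trans (mullt _ _ _ (hap0 p) hbB) hD)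
            _ = a := mul_one a
        have hT2 : a ^ (p + 1) * b ^ (p ^ 2) < a := by
          calc a ^ (p + 1) * b ^ (p ^ 2) = a * (a ^ p * b ^ (p ^ 2)) := by
                rw [← mul_assoc, ← pow_succ']
            _ < a * 1 := mullt _ _ _ hx hD
            _ = a := mul_one a
        have h12 : v (x ^ (p + 1) * y + x ^ (p + 1) * y ^ (p ^ 2)) < a :=
          lt_of_le_of_lt (v.map_add _ _) (max_lt (vT1 ▸ hT1) (vT2 ▸ hT2))
        have h123 : v (x ^ (p + 1) * y + x ^ (p + 1) * y ^ (p ^ 2) + x ^ (2 * p + 1)) < a :=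
          lt_of_le_of_lt (v.map_add _ _) (max_lt h12 (by rw [vT3]; exact hT3a))
        rw [one_pow, mul_one]
        exact v.map_add_eq_of_lt_right h123
      · -- contradiction
        exfalso
        have h1 : (a * b ^ p) ^ p = 1 ^ p := by
          rw [one_pow, mul_pow, ← pow_mul, ← hpp, hD]
        have h2 : a * b ^ p = 1 := (pow_left_inj₀ zero_le' zero_le' hp0).mp h1
        refine hvx ⟨b⁻¹, ?_⟩
        rw [inv_pow]
        exact eq_inv_of_mul_eq_one_left h2
      · -- v f = a^(p+1) b^(p^2)
        refine ⟨a * b ^ p, mul_ne_zero hx (pow_ne_zero _ hb0), ?_⟩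
        have hT1 : a ^ (p + 1) * b < a ^ (p + 1) * b ^ (p ^ 2) := mullt _ _ _ (hap0 _) hbB
        have hT3 : a ^ (2 * p + 1) < a ^ (p + 1) * b ^ (p ^ 2) := by
          rw [idT3]
          exact mullt _ _ _ (hap0 _) (lt_trans hap (lt_trans hB hbB))
        have hT4 : a < a ^ (p + 1) * b ^ (p ^ 2) := by
          calc a = a * 1 := (mul_one a).symm
            _ < a * (a ^ p * b ^ (p ^ 2)) := mullt _ _ _ hx hD
            _ = a ^ (p + 1) * b ^ (p ^ 2) := by rw [← mul_assoc, ← pow_succ']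
        have h12 : v (x ^ (p + 1) * y + x ^ (p + 1) * y ^ (p ^ 2))
            = a ^ (p + 1) * b ^ (p ^ 2) := by
          rw [v.map_add_eq_of_lt_right (show v (x ^ (p + 1) * y) < v (x ^ (p + 1) * y ^ (p ^ 2))
            by rw [vT1, vT2]; exact hT1), vT2]
        have h123 : v (x ^ (p + 1) * y + x ^ (p + 1) * y ^ (p ^ 2) + x ^ (2 * p + 1))
            = a ^ (p + 1) * b ^ (p ^ 2) := by
          rw [v.map_add_eq_of_lt_left (show v (x ^ (2 * p + 1)) <
            v (x ^ (p + 1) * y + x ^ (p + 1) * y ^ (p ^ 2)) by rw [vT3, h12]; exact hT3), h12]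
        rw [v.map_add_eq_of_lt_left (show v x <
          v (x ^ (p + 1) * y + x ^ (p + 1) * y ^ (p ^ 2) + x ^ (2 * p + 1))
          by rw [h123]; exact hT4), h123, idT2 b]
  · exact absurd hA ha1
  · -- 1 < a
    have hap : 1 < a ^ p := one_lt_pow₀ hA hp0
    have ha2p : 1 < a ^ (2 * p) := one_lt_pow₀ hA (by omega)
    have hT4 : a < a ^ (2 * p + 1) := by
      calc a = a * 1 := (mul_one a).symm
        _ < a * a ^ (2 * p) := mullt _ _ _ hx ha2p
        _ = a ^ (2 * p + 1) := (pow_succ' a (2 * p)).symm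
    rcases le_or_gt b 1 with hB | hB
    · -- b ≤ 1 : v f = a^(2p+1)
      refine ⟨a ^ 2, pow_ne_zero _ hx, ?_⟩
      have hc : v (y + y ^ (p ^ 2)) ≤ 1 := by
        refine (v.map_add _ _).trans (max_le hB ?_)
        rw [map_pow]; exact pow_le_one₀ zero_le' hB
      have h12 : v (x ^ (p + 1) * y + x ^ (p + 1) * y ^ (p ^ 2)) < a ^ (2 * p + 1) := by
        rw [v12]
        calc a ^ (p + 1) * v (y + y ^ (p ^ 2)) ≤ a ^ (p + 1) * 1 := mul_le_mul_right hc _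
          _ < a ^ (p + 1) * a ^ p := mullt _ _ _ (hap0 _) hap
          _ = a ^ (2 * p + 1) := idT3.symm
      have h123 : v (x ^ (p + 1) * y + x ^ (p + 1) * y ^ (p ^ 2) + x ^ (2 * p + 1))
          = a ^ (2 * p + 1) := by
        rw [v.map_add_eq_of_lt_right (show v (x ^ (p + 1) * y + x ^ (p + 1) * y ^ (p ^ 2)) <
          v (x ^ (2 * p + 1)) by rw [vT3]; exact h12), vT3]
      rw [v.map_add_eq_of_lt_left (show v x <
        v (x ^ (p + 1) * y + x ^ (p + 1) * y ^ (p ^ 2) + x ^ (2 * p + 1))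
        by rw [h123]; exact hT4), h123, id3]
    · -- b > 1
      have hb0 : b ≠ 0 := (zero_lt_one.trans hB).ne'
      have hbB : b < b ^ (p ^ 2) := by
        conv_lhs => rw [← pow_one b]
        exact pow_lt_pow_right₀ hB h1p2
      rcases lt_trichotomy (b ^ (p ^ 2)) (a ^ p) with hD | hD | hD
      · -- v f = a^(2p+1)
        refine ⟨a ^ 2, pow_ne_zero _ hx, ?_⟩
        have hT1 : a ^ (p + 1) * b < a ^ (2 * p + 1) := by
          rw [idT3]; exact mullt _ _ _ (hap0 _) (lt_trans hbB hD)
        have hT2 : a ^ (p + 1) * b ^ (p ^ 2) < a ^ (2 * p + 1) := by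
          rw [idT3]; exact mullt _ _ _ (hap0 _) hD
        have h12 : v (x ^ (p + 1) * y + x ^ (p + 1) * y ^ (p ^ 2)) < a ^ (2 * p + 1) :=
          lt_of_le_of_lt (v.map_add _ _) (max_lt (vT1 ▸ hT1) (vT2 ▸ hT2))
        have h123 : v (x ^ (p + 1) * y + x ^ (p + 1) * y ^ (p ^ 2) + x ^ (2 * p + 1))
            = a ^ (2 * p + 1) := by
          rw [v.map_add_eq_of_lt_right (show v (x ^ (p + 1) * y + x ^ (p + 1) * y ^ (p ^ 2)) <
            v (x ^ (2 * p + 1)) by rw [vT3]; exact h12), vT3]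
        rw [v.map_add_eq_of_lt_left (show v x <
          v (x ^ (p + 1) * y + x ^ (p + 1) * y ^ (p ^ 2) + x ^ (2 * p + 1))
          by rw [h123]; exact hT4), h123, id3]
      · -- contradiction
        exfalso
        have h1 : (b ^ p) ^ p = a ^ p := by rw [← pow_mul, ← hpp, hD]
        exact hvx ⟨b, ((pow_left_inj₀ zero_le' zero_le' hp0).mp h1).symm⟩
      · -- v f = a^(p+1) b^(p^2)
        refine ⟨a * b ^ p, mul_ne_zero hx (pow_ne_zero _ hb0), ?_⟩
        have hT1 : a ^ (p + 1) * b < a ^ (p + 1) * b ^ (p ^ 2) := mullt _ _ _ (hap0 _) hbB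
        have hT3 : a ^ (2 * p + 1) < a ^ (p + 1) * b ^ (p ^ 2) := by
          rw [idT3]; exact mullt _ _ _ (hap0 _) hD
        have hone : (1 : Γ₀) < a ^ p * b ^ (p ^ 2) := by
          calc (1 : Γ₀) = 1 * 1 := (mul_one 1).symm
            _ < a ^ p * b ^ (p ^ 2) :=
              mul_lt_mul_of_le_of_lt_of_nonneg_of_pos hap.le (one_lt_pow₀ hB hp20) zero_le' (zero_lt_iff.mpr (hap0 p))
        have hT4 : a < a ^ (p + 1) * b ^ (p ^ 2) := by
          calc a = a * 1 := (mul_one a).symm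
            _ < a * (a ^ p * b ^ (p ^ 2)) := mullt _ _ _ hx hone
            _ = a ^ (p + 1) * b ^ (p ^ 2) := by rw [← mul_assoc, ← pow_succ']
        have h12 : v (x ^ (p + 1) * y + x ^ (p + 1) * y ^ (p ^ 2))
            = a ^ (p + 1) * b ^ (p ^ 2) := by
          rw [v.map_add_eq_of_lt_right (show v (x ^ (p + 1) * y) < v (x ^ (p + 1) * y ^ (p ^ 2))
            by rw [vT1, vT2]; exact hT1), vT2]
        have h123 : v (x ^ (p + 1) * y + x ^ (p + 1) * y ^ (p ^ 2) + x ^ (2 * p + 1))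
            = a ^ (p + 1) * b ^ (p ^ 2) := by
          rw [v.map_add_eq_of_lt_left (show v (x ^ (2 * p + 1)) <
            v (x ^ (p + 1) * y + x ^ (p + 1) * y ^ (p ^ 2)) by rw [vT3, h12]; exact hT3), h12]
        rw [v.map_add_eq_of_lt_left (show v x <
          v (x ^ (p + 1) * y + x ^ (p + 1) * y ^ (p ^ 2) + x ^ (2 * p + 1))
          by rw [h123]; exact hT4), h123, idT2 b]

theorem stmt3 (K : Type*) [Field K] (p : ℕ) (hp : p.Prime) [CharP K p]
    (Γ₀ : Type*) [LinearOrderedCommGroupWithZero Γ₀] (v : Valuation K Γ₀)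
    (x : K) (hx : x ≠ 0) (hvx : ¬ ∃ γ : Γ₀, v x = γ ^ p) (y : K) :
    (¬ ∃ γ : Γ₀, v (x ^ (p + 1) * y + x ^ (p + 1) * y ^ (p ^ 2) + x ^ (2 * p + 1) + x) = γ ^ p) ∧
      ¬ ∃ z : K, z ^ p = x ^ (p + 1) * y + x ^ (p + 1) * y ^ (p ^ 2) + x ^ (2 * p + 1) + x := by
  have hx0 : v x ≠ 0 := by
    simp [Valuation.ne_zero_iff, hx]
  obtain ⟨d, hd, hvf⟩ := key_val v p hp.two_le x y hx0 hvx
  have h1 : ¬ ∃ γ : Γ₀,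
      v (x ^ (p + 1) * y + x ^ (p + 1) * y ^ (p ^ 2) + x ^ (2 * p + 1) + x) = γ ^ p := by
    rintro ⟨γ, hγ⟩
    refine hvx ⟨γ * d⁻¹, ?_⟩
    have hdp : d ^ p ≠ 0 := pow_ne_zero _ hd
    have h2 : v x * d ^ p = γ ^ p := by rw [← hvf, hγ]
    rw [mul_pow, inv_pow]
    exact (eq_mul_inv_iff_mul_eq₀ hdp).mpr h2
  refine ⟨h1, ?_⟩
  rintro ⟨z, hz⟩
  exact h1 ⟨v z, by rw [← hz, map_pow]⟩
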